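/- Let p, p', v ∈ ℝ^m with p' ≠ v, and let R > 0 satisfy d(p, p') ≤ R and d(p', v) ≤ R. If v is a pivot relative to p at p', i.e., d(p', v) ≥ d(p, v), and p'' is the point of the closed segment [p', v] closest to p, then d(p, p'')² ≤ d(p, p')² · (1 − d(p, p')² / (4R²)). -/

import Mathlib

private lemma pivot_aux1 (δ r R c : ℝ) (hr : 0 < r) (hR : 0 < R)
    (hδ0 : 0 ≤ δ) (hrR2 : r ^ 2 ≤ R ^ 2) (hcge : δ ^ 2 / 2 ≤ c) :
    δ ^ 2 - c ^ 2 / r ^ 2 ≤ δ ^ 2 * (1 - δ ^ 2 / (4 * R ^ 2)) := by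
  have h1 : δ ^ 4 / (4 * R ^ 2) ≤ c ^ 2 / r ^ 2 := by
    rw [div_le_div_iff₀ (by positivity) (by positivity)]
    have hc0 : (0:ℝ) ≤ c := le_trans (by positivity) hcge
    have hc2 : δ ^ 4 ≤ 4 * c ^ 2 := by nlinarith
    nlinarith [mul_le_mul_of_nonneg_left hrR2 (pow_nonneg hδ0 4),
      mul_le_mul_of_nonneg_right hc2 (sq_nonneg R)]
  have h2 : δ ^ 2 * (1 - δ ^ 2 / (4 * R ^ 2)) = δ ^ 2 - δ ^ 4 / (4 * R ^ 2) := by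
    field_simp
  linarith

private lemma pivot_aux2 (δ r R : ℝ) (hr : 0 < r) (hR : 0 < R) (hδ0 : 0 ≤ δ)
    (hδR2 : δ ^ 2 ≤ R ^ 2) (hδ4r : δ ^ 2 ≤ 4 * r ^ 2) :
    δ ^ 2 - r ^ 2 ≤ δ ^ 2 * (1 - δ ^ 2 / (4 * R ^ 2)) := by
  have h1 : δ ^ 4 / (4 * R ^ 2) ≤ r ^ 2 := by
    rw [div_le_iff₀ (by positivity)]
    nlinarith [mul_le_mul hδ4r hδR2 (sq_nonneg δ) (by positivity : (0:ℝ) ≤ 4 * r ^ 2)]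
  have h2 : δ ^ 2 * (1 - δ ^ 2 / (4 * R ^ 2)) = δ ^ 2 - δ ^ 4 / (4 * R ^ 2) := by
    field_simp
  linarith


/-- Per-iteration progress of the triangle algorithm: if `d(p, p') ≤ R`,
`d(p', v) ≤ R`, `v` is a pivot (`d(p', v) ≥ d(p, v)`), and `p''` is the point of
`[p', v]` closest to `p`, then `d(p, p'')² ≤ d(p, p')² (1 - d(p, p')² / (4R²))`. -/
theorem pivot_step_progress {m : ℕ} (p p' v p'' : EuclideanSpace ℝ (Fin m))
    (hp'v : p' ≠ v) (R : ℝ) (hR : 0 < R) (hR1 : dist p p' ≤ R) (hR2 : dist p' v ≤ R)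
    (hpivot : dist p v ≤ dist p' v)
    (hmem : p'' ∈ segment ℝ p' v)
    (hmin : ∀ x ∈ segment ℝ p' v, dist p p'' ≤ dist p x) :
    dist p p'' ^ 2 ≤ dist p p' ^ 2 * (1 - dist p p' ^ 2 / (4 * R ^ 2)) := by
  set δ := dist p p' with hδdef
  set r := dist p' v with hrdef
  have hr : 0 < r := dist_pos.mpr hp'v
  have hδ0 : 0 ≤ δ := dist_nonneg
  set u := p - p' with hu
  set w := v - p' with hw
  have hnu : ‖u‖ = δ := (dist_eq_norm p p').symm
  have hnw : ‖w‖ = r := (dist_eq_norm' p' v).symm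
  set c : ℝ := inner ℝ u w with hc
  -- pivot condition gives c ≥ δ²/2
  have hpiv2 : δ ^ 2 - 2 * c + r ^ 2 ≤ r ^ 2 := by
    have h1 : ‖u - w‖ = dist p v := by
      rw [dist_eq_norm]; congr 1
      simp only [hu, hw]; abel
    have h2 : ‖u - w‖ ^ 2 ≤ r ^ 2 := by
      rw [h1]; exact pow_le_pow_left₀ dist_nonneg hpivot 2
    have h3 : ‖u - w‖ ^ 2 = ‖u‖ ^ 2 - 2 * c + ‖w‖ ^ 2 := norm_sub_sq_real u w
    rw [h3, hnu, hnw] at h2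
    exact h2
  have hcge : δ ^ 2 / 2 ≤ c := by linarith
  -- distance to a segment point
  have key : ∀ t : ℝ, 0 ≤ t → t ≤ 1 →
      dist p p'' ^ 2 ≤ δ ^ 2 - 2 * t * c + t ^ 2 * r ^ 2 := by
    intro t ht0 ht1
    set x : EuclideanSpace ℝ (Fin m) := p' + t • w with hx
    have hxmem : x ∈ segment ℝ p' v := by
      refine ⟨1 - t, t, by linarith, ht0, by ring, ?_⟩
      simp only [hx, hw]
      module
    have hd : dist p x ^ 2 = δ ^ 2 - 2 * t * c + t ^ 2 * r ^ 2 := by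
      have h1 : p - x = u - t • w := by
        simp only [hx, hu]; abel
      have h2 : dist p x ^ 2 = ‖u - t • w‖ ^ 2 := by
        rw [dist_eq_norm, h1]
      rw [h2, norm_sub_sq_real, real_inner_smul_right, norm_smul, mul_pow,
        hnu, hnw, Real.norm_eq_abs, sq_abs, ← hc]
      ring
    calc dist p p'' ^ 2 ≤ dist p x ^ 2 :=
          pow_le_pow_left₀ dist_nonneg (hmin x hxmem) 2
      _ = _ := hd
  clear_value u w c
  have hrR2 : r ^ 2 ≤ R ^ 2 := pow_le_pow_left₀ hr.le hR2 2
  have hδR2 : δ ^ 2 ≤ R ^ 2 := pow_le_pow_left₀ hδ0 hR1 2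
  have hδ2r : δ ≤ 2 * r := by
    have htri := dist_triangle p v p'
    have h2 : dist v p' = r := dist_comm v p'
    linarith [hpivot]
  have hδ4r : δ ^ 2 ≤ 4 * r ^ 2 := by nlinarith
  by_cases hcase : c ≤ r ^ 2
  · -- interior minimum at t = c / r²
    have ht0 : (0:ℝ) ≤ c / r ^ 2 := div_nonneg (by nlinarith) (by positivity)
    have ht1 : c / r ^ 2 ≤ 1 := (div_le_one (by positivity)).mpr hcase
    have := key (c / r ^ 2) ht0 ht1
    have hval : δ ^ 2 - 2 * (c / r ^ 2) * c + (c / r ^ 2) ^ 2 * r ^ 2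
        = δ ^ 2 - c ^ 2 / r ^ 2 := by
      field_simp; ring
    rw [hval] at this
    have hbound : δ ^ 2 - c ^ 2 / r ^ 2 ≤ δ ^ 2 * (1 - δ ^ 2 / (4 * R ^ 2)) :=
      pivot_aux1 δ r R c hr hR hδ0 hrR2 hcge
    linarith
  · -- minimum at endpoint v, i.e. t = 1
    push_neg at hcase
    have := key 1 zero_le_one le_rfl
    have hval : δ ^ 2 - 2 * 1 * c + 1 ^ 2 * r ^ 2 ≤ δ ^ 2 - r ^ 2 := by linarith
    have hbound : δ ^ 2 - r ^ 2 ≤ δ ^ 2 * (1 - δ ^ 2 / (4 * R ^ 2)) :=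
      pivot_aux2 δ r R hr hR hδ0 hδR2 hδ4r
    linarith
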